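/- arXiv:1509.06541 — 2 statements merged into one kernel-verified Lean document; each statement's English description precedes it below -/
import Mathlib

section
/- For simple shear with amount γ, the matrix logarithm of the stretch U satisfies log U = (1/√(γ²+4))·[[−γ·log λ₁, 2·log λ₁, 0],[2·log λ₁, γ·log λ₁, 0],[0,0,0]], where λ₁ = (√(γ²+4)+γ)/2. -/
open Matrix Real

set_option maxHeartbeats 1600000 in
/-- For simple shear with amount γ, the matrix logarithm of the stretch `U`
(the unique symmetric `L` with `exp L = U`) is
`(1/√(γ²+4)) • [[−γ log λ₁, 2 log λ₁, 0],[2 log λ₁, γ log λ₁, 0],[0,0,0]]`,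
where `λ₁ = (√(γ²+4)+γ)/2`. -/
theorem simple_shear_log_stretch (γ : ℝ)
    (U L : Matrix (Fin 3) (Fin 3) ℝ)
    (hU : U = (1 / Real.sqrt (γ ^ 2 + 4)) •
      !![2, γ, 0; γ, γ ^ 2 + 2, 0; 0, 0, Real.sqrt (γ ^ 2 + 4)])
    (lam₁ : ℝ) (hlam : lam₁ = (Real.sqrt (γ ^ 2 + 4) + γ) / 2)
    (hL : L = (1 / Real.sqrt (γ ^ 2 + 4)) •
      !![-γ * Real.log lam₁, 2 * Real.log lam₁, 0;
         2 * Real.log lam₁, γ * Real.log lam₁, 0; 0, 0, 0]) :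
    Lᵀ = L ∧ NormedSpace.exp L = U := by
  have hsym : Lᵀ = L := by
    rw [hL, Matrix.transpose_smul]
    congr 1
    ext i j
    fin_cases i <;> fin_cases j <;> rfl
  refine ⟨hsym, ?_⟩
  set s : ℝ := Real.sqrt (γ ^ 2 + 4) with hs
  have hs2 : s ^ 2 = γ ^ 2 + 4 := Real.sq_sqrt (by positivity)
  have hs0 : 0 < s := Real.sqrt_pos.2 (by positivity)
  have hsγ : |γ| < s := by
    rw [← Real.sqrt_sq_eq_abs]; exact Real.sqrt_lt_sqrt (sq_nonneg γ) (by linarith)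
  have habs := abs_lt.1 hsγ
  set a : ℝ := lam₁
  have ha0 : 0 < a := by rw [hlam]; linarith [habs.1]
  have ha : a ≠ 0 := ne_of_gt ha0
  have han : a * ((s - γ) / 2) = 1 := by rw [hlam]; nlinarith [hs2]
  have hainv : a⁻¹ = (s - γ) / 2 := inv_eq_of_mul_eq_one_right han
  have hγ : γ = a - a⁻¹ := by rw [hainv, hlam]; ring
  have hss : s = a + a⁻¹ := by rw [hainv, hlam]; ring
  have hane : a + a⁻¹ ≠ 0 := by positivity
  set ℓ : ℝ := Real.log lam₁ with hℓ
  have hea : Real.exp ℓ = a := Real.exp_log ha0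
  have heb : Real.exp (-ℓ) = a⁻¹ := by rw [Real.exp_neg, hea]
  set C : Matrix (Fin 3) (Fin 3) ℝ := !![1, 1, 0; a, -a⁻¹, 0; 0, 0, 1] with hC
  set Ci : Matrix (Fin 3) (Fin 3) ℝ :=
    (1 / s) • !![a⁻¹, 1, 0; a, -1, 0; 0, 0, s] with hCi
  have hCCi : C * Ci = 1 := by
    ext i j
    fin_cases i <;> fin_cases j <;>
      simp [hC, hCi, Matrix.mul_apply, Fin.sum_univ_three, Matrix.one_apply, Matrix.vecHead, Matrix.vecTail] <;>
      (try simp only [hγ, hss]) <;> (try field_simp) <;> (try ring)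
  have hunit : IsUnit C := by
    apply (Matrix.isUnit_iff_isUnit_det C).2
    exact IsUnit.of_mul_eq_one Ci.det (by rw [← Matrix.det_mul, hCCi, Matrix.det_one])
  have hCinv : C⁻¹ = Ci := Matrix.inv_eq_right_inv hCCi
  set D : Matrix (Fin 3) (Fin 3) ℝ := !![ℓ, 0, 0; 0, -ℓ, 0; 0, 0, 0] with hD
  have hLD : L = C * D * C⁻¹ := by
    rw [hCinv, hL]
    ext i j
    fin_cases i <;> fin_cases j <;>
      simp [hC, hCi, hD, Matrix.mul_apply, Fin.sum_univ_three, Matrix.vecHead, Matrix.vecTail] <;>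
      (try simp only [hγ, hss]) <;> (try field_simp) <;> (try ring)
  have hDdiag : D = Matrix.diagonal ![ℓ, -ℓ, 0] := by
    ext i j
    fin_cases i <;> fin_cases j <;> simp [hD, Matrix.diagonal_apply, Matrix.vecHead, Matrix.vecTail]
  have hv : NormedSpace.exp ![ℓ, -ℓ, 0] = ![a, a⁻¹, 1] := by
    funext i
    rw [Pi.coe_exp]
    fin_cases i <;> simp [← Real.exp_eq_exp_ℝ, hea, heb]
  have hexpD : NormedSpace.exp D = Matrix.diagonal ![a, a⁻¹, 1] := by
    rw [hDdiag, Matrix.exp_diagonal, hv]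
  rw [hLD, Matrix.exp_conj C D hunit, hexpD, hCinv, hU]
  have hdd : Matrix.diagonal ![a, a⁻¹, (1:ℝ)] = !![a, 0, 0; 0, a⁻¹, 0; 0, 0, 1] := by
    ext i j
    fin_cases i <;> fin_cases j <;> simp [Matrix.diagonal_apply, Matrix.vecHead, Matrix.vecTail]
  rw [hdd]
  ext i j
  fin_cases i <;> fin_cases j <;>
    simp [hC, hCi, Matrix.mul_apply, Fin.sum_univ_three, Matrix.vecHead, Matrix.vecTail] <;>
    (try simp only [hγ, hss]) <;> (try field_simp) <;> (try ring)
end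

section
/- The derivative of the shear stress τ₁₂(γ) = 4μ·e^{2k h(γ)²}·h(γ)/√(γ²+4) at γ = 0 equals μ, i.e. the infinitesimal shear modulus of the exponentiated Hencky model is μ. -/
/-- The derivative at `γ = 0` of the shear stress
`τ₁₂(γ) = 4μ e^{2k h(γ)²} h(γ)/√(γ²+4)` equals μ: the infinitesimal shear modulus
of the exponentiated Hencky model is μ. -/
theorem shear_stress_deriv_at_zero (μ k : ℝ) (hμ : 0 < μ)
    (h τ : ℝ → ℝ)
    (hdef : ∀ γ : ℝ, h γ = Real.log ((Real.sqrt (γ ^ 2 + 4) + γ) / 2))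
    (hτ : ∀ γ : ℝ, τ γ = 4 * μ * Real.exp (2 * k * (h γ) ^ 2) * h γ / Real.sqrt (γ ^ 2 + 4)) :
    HasDerivAt τ μ 0 := by
  have hs4 : Real.sqrt ((0:ℝ)^2 + 4) = 2 := by
    norm_num
  have h1 : HasDerivAt (fun γ : ℝ => γ^2 + 4) 0 0 := by
    simpa using ((hasDerivAt_pow 2 (0:ℝ)).add_const 4)
  have hsq : HasDerivAt (fun γ : ℝ => Real.sqrt (γ^2 + 4)) 0 0 := by
    have := h1.sqrt (by norm_num)
    simpa using this
  have hf : HasDerivAt (fun γ : ℝ => (Real.sqrt (γ^2+4) + γ)/2) (1/2) 0 := by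
    have := (hsq.add (hasDerivAt_id 0)).div_const 2
    simpa using this
  have hs4' : Real.sqrt (4:ℝ) = 2 := by
    rw [show (4:ℝ) = 2^2 by norm_num, Real.sqrt_sq (by norm_num)]
  have h0 : h 0 = 0 := by
    rw [hdef]
    norm_num [hs4']
  have hh : HasDerivAt h (1/2) 0 := by
    have hfun : h = fun γ : ℝ => Real.log ((Real.sqrt (γ^2+4) + γ)/2) := by
      funext γ; exact hdef γ
    have : HasDerivAt (fun γ : ℝ => Real.log ((Real.sqrt (γ^2+4) + γ)/2))
        ((1/2) / ((Real.sqrt ((0:ℝ)^2+4) + 0)/2)) 0 := hf.log (by rw [hs4]; norm_num)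
    rw [hfun]
    convert this using 1
    rw [hs4]; norm_num
  -- numerator: 4μ exp(2k h²) h
  have hexp : HasDerivAt (fun γ : ℝ => Real.exp (2 * k * (h γ)^2))
      (Real.exp (2 * k * (h 0)^2) * (2 * k * (2 * h 0 ^ 1 * (1/2)))) 0 :=
    (((hh.pow 2).const_mul (2*k)).exp)
  have hnum : HasDerivAt (fun γ : ℝ => 4 * μ * Real.exp (2 * k * (h γ)^2) * h γ)
      (4 * μ * ((Real.exp (2 * k * (h 0)^2) * (2 * k * (2 * h 0 ^ 1 * (1/2)))) * h 0
        + Real.exp (2 * k * (h 0)^2) * (1/2))) 0 := by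
    have hfe : (fun γ : ℝ => 4 * μ * Real.exp (2 * k * (h γ)^2) * h γ)
        = fun γ : ℝ => 4 * μ * (Real.exp (2 * k * (h γ)^2) * h γ) := by
      funext γ; ring
    rw [hfe]
    exact (hexp.mul hh).const_mul (4 * μ)
  have hτd : HasDerivAt τ μ 0 := by
    have hfun : τ = fun γ : ℝ =>
        (4 * μ * Real.exp (2 * k * (h γ)^2) * h γ) / Real.sqrt (γ^2 + 4) := by
      funext γ; exact hτ γ
    rw [hfun]
    have := hnum.div hsq (by rw [hs4]; norm_num)
    refine this.congr_deriv ?_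
    rw [hs4, h0]
    norm_num
    ring
  exact hτd
end
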